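/- Let φ ∈ Λ^p V* on an n-dimensional real inner product space V, and let *φ ∈ Λ^{n-p} V* be its Hodge dual. Then a unit decomposable p-vector ξ ∈ Gr_o(p,V) is a critical point of φ on Gr_o(p,V) if and only if a (suitably oriented) unit decomposable (n-p)-vector ξ^⊥ spanning the orthogonal complement of [ξ] is a critical point of *φ on Gr_o(n-p,V). -/

import Mathlib

open scoped RealInnerProductSpace

/-- **Hodge duality of criticality.**  Let `V` be an oriented `(p+q)`-dimensional real inner
product space, with orientation given by a nonzero top form `Ω`.  Let `φ ∈ Λ^p V*` and let
`ψ = *φ ∈ Λ^q V*` be its Hodge dual, characterized by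
`ψ(u_{p+1},…,u_{p+q}) = φ(u₁,…,u_p)` for every positively oriented orthonormal basis
`u₁,…,u_{p+q}` of `V`.  Given an orthonormal basis `e₁,…,e_{p+q}` (positively oriented), the
unit decomposable `p`-vector `ξ = e₁ ∧ ⋯ ∧ e_p` is a critical point of `φ` on `Gr_o(p,V)`
(First Cousin Principle) if and only if the complementary unit decomposable `q`-vector
`ξ^⊥ = e_{p+1} ∧ ⋯ ∧ e_{p+q}` is a critical point of `*φ` on `Gr_o(q,V)`. -/
theorem critical_iff_hodge_dual_critical
    {V : Type*} [NormedAddCommGroup V] [InnerProductSpace ℝ V] [FiniteDimensional ℝ V]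
    {p q : ℕ} (hdim : Module.finrank ℝ V = p + q)
    (Ω : AlternatingMap ℝ V ℝ (Fin (p + q))) (hΩ : Ω ≠ 0)
    (φ : AlternatingMap ℝ V ℝ (Fin p)) (ψ : AlternatingMap ℝ V ℝ (Fin q))
    (hψ : ∀ u : Fin (p + q) → V, Orthonormal ℝ u → 0 < Ω u →
      ψ (fun i => u (Fin.natAdd p i)) = φ (fun i => u (Fin.castAdd q i)))
    (e : Fin (p + q) → V) (he : Orthonormal ℝ e) (hor : 0 < Ω e) :
    (∀ v : V, (∀ i : Fin p, ⟪v, e (Fin.castAdd q i)⟫ = 0) → ∀ a : Fin p,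
      φ (Function.update (fun i : Fin p => e (Fin.castAdd q i)) a v) = 0)
    ↔ (∀ v : V, (∀ i : Fin q, ⟪v, e (Fin.natAdd p i)⟫ = 0) → ∀ a : Fin q,
        ψ (Function.update (fun i : Fin q => e (Fin.natAdd p i)) a v) = 0) := by
  classical
  by_cases h0 : p + q = 0
  · obtain ⟨hp, hq⟩ : p = 0 ∧ q = 0 := by omega
    subst hp; subst hq
    constructor <;> · intro _ v hv a; exact a.elim0
  haveI : Nonempty (Fin (p + q)) := ⟨⟨0, Nat.pos_of_ne_zero h0⟩⟩
  have hne : ∀ (a : Fin p) (c : Fin q), Fin.castAdd q a ≠ Fin.natAdd p c := by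
    intro a c h
    have ha := a.isLt
    have := Fin.val_eq_of_eq h
    simp [Fin.castAdd, Fin.natAdd] at this
    omega
  have hcard : Fintype.card (Fin (p + q)) = Module.finrank ℝ V := by simp [hdim]
  have hite := orthonormal_iff_ite.mp he
  -- representation of any vector in the orthonormal basis `e`
  have hrepr : ∀ v : V, v = ∑ i, ⟪e i, v⟫ • e i := by
    intro v
    let b0 : Module.Basis (Fin (p + q)) ℝ V :=
      basisOfLinearIndependentOfCardEqFinrank he.linearIndependent hcard
    have hb0 : ⇑b0 = e := coe_basisOfLinearIndependentOfCardEqFinrank _ _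
    let B : OrthonormalBasis (Fin (p + q)) ℝ V := b0.toOrthonormalBasis (by rwa [hb0])
    have hB : ⇑B = e := by
      rw [show ⇑B = ⇑b0 from Module.Basis.coe_toOrthonormalBasis _ _, hb0]
    conv_lhs => rw [← B.sum_repr v]
    refine Finset.sum_congr rfl fun i _ => ?_
    rw [B.repr_apply_apply, hB]
  -- the key duality of single cross-replacements
  have key : ∀ (a : Fin p) (c : Fin q),
      φ (Function.update (fun i : Fin p => e (Fin.castAdd q i)) a (e (Fin.natAdd p c)))
        = - ψ (Function.update (fun i : Fin q => e (Fin.natAdd p i)) c (e (Fin.castAdd q a))) := by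
    intro a c
    set ca := Fin.castAdd q a with hca
    set nc := Fin.natAdd p c with hnc
    have hcn : ca ≠ nc := hne a c
    set u : Fin (p + q) → V :=
      Function.update (Function.update e ca (e nc)) nc (-(e ca)) with hu
    have huc : ∀ i, u i = (if i = nc then (-1 : ℝ) else 1) • e (Equiv.swap ca nc i) := by
      intro i
      by_cases h1 : i = nc
      · subst h1; simp [hu, Function.update, Equiv.swap_apply_right]
      · by_cases h2 : i = ca
        · subst h2; simp [hu, Function.update, hcn, Equiv.swap_apply_left, h1]
        · simp [hu, Function.update, h1, h2, Equiv.swap_apply_of_ne_of_ne h2 h1]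
    have hun : Orthonormal ℝ u := by
      rw [orthonormal_iff_ite]
      intro i j
      rw [huc i, huc j, real_inner_smul_left, real_inner_smul_right,
        hite (Equiv.swap ca nc i) (Equiv.swap ca nc j)]
      by_cases hij : i = j
      · subst hij
        by_cases h : i = nc <;> simp [h]
      · have h2 : Equiv.swap ca nc i ≠ Equiv.swap ca nc j := fun h => hij (Equiv.injective _ h)
        simp [hij, h2]
    have hswap : Function.update (Function.update e ca (e nc)) nc (e ca)
        = e ∘ Equiv.swap ca nc := by
      funext i
      by_cases h1 : i = nc
      · subst h1; simp [Function.update, Equiv.swap_apply_right]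
      · by_cases h2 : i = ca
        · subst h2; simp [Function.update, hcn, Equiv.swap_apply_left, h1]
        · simp [Function.update, h1, h2, Equiv.swap_apply_of_ne_of_ne h2 h1]
    have hΩu : 0 < Ω u := by
      have h1 : Ω u = - Ω (Function.update (Function.update e ca (e nc)) nc (e ca)) :=
        Ω.toMultilinearMap.map_update_neg _ nc (e ca)
      rw [h1, hswap, Ω.map_swap e hcn]
      simpa using hor
    have hmain := hψ u hun hΩu
    have h2 : (fun i => u (Fin.castAdd q i))
        = Function.update (fun i : Fin p => e (Fin.castAdd q i)) a (e nc) := by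
      funext i
      have hi1 : Fin.castAdd q i ≠ nc := hne i c
      by_cases h : i = a
      · subst h; simp [hu, Function.update, hi1, hca]
      · have : Fin.castAdd q i ≠ ca := by
          simp only [hca]; exact fun hh => h (Fin.castAdd_injective _ _ hh)
        simp [hu, Function.update, hi1, this, h]
    have h3 : (fun i => u (Fin.natAdd p i))
        = Function.update (fun i : Fin q => e (Fin.natAdd p i)) c (-(e ca)) := by
      funext i
      have hi1 : Fin.natAdd p i ≠ ca := (hne a i).symm
      by_cases h : i = c
      · subst h; simp [hu, Function.update, hnc]
      · have : Fin.natAdd p i ≠ nc := by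
          simp only [hnc]
          intro hh
          exact h (Fin.ext (by have := Fin.val_eq_of_eq hh; simpa using this))
        simp [hu, Function.update, hi1, this, h]
    rw [h2, h3] at hmain
    have h4 : ψ (Function.update (fun i : Fin q => e (Fin.natAdd p i)) c (-(e ca)))
        = - ψ (Function.update (fun i : Fin q => e (Fin.natAdd p i)) c (e ca)) :=
      ψ.toMultilinearMap.map_update_neg _ c (e ca)
    rw [← hmain, h4]
  constructor
  · intro H v hv c
    have hexp : ψ (Function.update (fun i : Fin q => e (Fin.natAdd p i)) c v)
        = ∑ i, ⟪e i, v⟫ • ψ (Function.update (fun i : Fin q => e (Fin.natAdd p i)) c (e i)) := by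
      have h1 : ψ (Function.update (fun i : Fin q => e (Fin.natAdd p i)) c
            (∑ i, ⟪e i, v⟫ • e i))
          = ∑ i, ψ (Function.update (fun i : Fin q => e (Fin.natAdd p i)) c
            (⟪e i, v⟫ • e i)) :=
        ψ.toMultilinearMap.map_update_sum Finset.univ c _ _
      have h2 : ∀ i : Fin (p + q),
          ψ (Function.update (fun i : Fin q => e (Fin.natAdd p i)) c (⟪e i, v⟫ • e i))
            = ⟪e i, v⟫ • ψ (Function.update (fun i : Fin q => e (Fin.natAdd p i)) c (e i)) :=
        fun i => ψ.toMultilinearMap.map_update_smul _ c _ _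
      conv_lhs => rw [hrepr v]
      rw [h1]
      exact Finset.sum_congr rfl fun i _ => h2 i
    rw [hexp, Fin.sum_univ_add]
    have hL : ∀ a : Fin p,
        ψ (Function.update (fun i : Fin q => e (Fin.natAdd p i)) c (e (Fin.castAdd q a))) = 0 := by
      intro a
      have hv' : ∀ i : Fin p, ⟪e (Fin.natAdd p c), e (Fin.castAdd q i)⟫ = 0 := by
        intro i
        rw [hite]
        simp [(hne i c).symm]
      have h5 := H (e (Fin.natAdd p c)) hv' a
      rw [key a c] at h5
      linarith
    have hR : ∀ j : Fin q, ⟪e (Fin.natAdd p j), v⟫ = 0 := by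
      intro j
      rw [real_inner_comm]
      exact hv j
    have e1 : (∑ a : Fin p, ⟪e (Fin.castAdd q a), v⟫ •
        ψ (Function.update (fun i : Fin q => e (Fin.natAdd p i)) c (e (Fin.castAdd q a)))) = 0 :=
      Finset.sum_eq_zero fun a _ => by rw [hL a, smul_zero]
    have e2 : (∑ j : Fin q, ⟪e (Fin.natAdd p j), v⟫ •
        ψ (Function.update (fun i : Fin q => e (Fin.natAdd p i)) c (e (Fin.natAdd p j)))) = 0 :=
      Finset.sum_eq_zero fun j _ => by rw [hR j, zero_smul]
    rw [e1, e2, add_zero]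
  · intro H v hv a
    have hexp : φ (Function.update (fun i : Fin p => e (Fin.castAdd q i)) a v)
        = ∑ i, ⟪e i, v⟫ • φ (Function.update (fun i : Fin p => e (Fin.castAdd q i)) a (e i)) := by
      have h1 : φ (Function.update (fun i : Fin p => e (Fin.castAdd q i)) a
            (∑ i, ⟪e i, v⟫ • e i))
          = ∑ i, φ (Function.update (fun i : Fin p => e (Fin.castAdd q i)) a
            (⟪e i, v⟫ • e i)) :=
        φ.toMultilinearMap.map_update_sum Finset.univ a _ _
      have h2 : ∀ i : Fin (p + q),
          φ (Function.update (fun i : Fin p => e (Fin.castAdd q i)) a (⟪e i, v⟫ • e i))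
            = ⟪e i, v⟫ • φ (Function.update (fun i : Fin p => e (Fin.castAdd q i)) a (e i)) :=
        fun i => φ.toMultilinearMap.map_update_smul _ a _ _
      conv_lhs => rw [hrepr v]
      rw [h1]
      exact Finset.sum_congr rfl fun i _ => h2 i
    rw [hexp, Fin.sum_univ_add]
    have hL : ∀ i : Fin p, ⟪e (Fin.castAdd q i), v⟫ = 0 := by
      intro i
      rw [real_inner_comm]
      exact hv i
    have hR : ∀ c : Fin q,
        φ (Function.update (fun i : Fin p => e (Fin.castAdd q i)) a (e (Fin.natAdd p c))) = 0 := by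
      intro c
      have hv' : ∀ i : Fin q, ⟪e (Fin.castAdd q a), e (Fin.natAdd p i)⟫ = 0 := by
        intro i
        rw [hite]
        simp [hne a i]
      have h5 := H (e (Fin.castAdd q a)) hv' c
      rw [key a c, h5, neg_zero]
    have e1 : (∑ i : Fin p, ⟪e (Fin.castAdd q i), v⟫ •
        φ (Function.update (fun i : Fin p => e (Fin.castAdd q i)) a (e (Fin.castAdd q i)))) = 0 :=
      Finset.sum_eq_zero fun i _ => by rw [hL i, zero_smul]
    have e2 : (∑ c : Fin q, ⟪e (Fin.natAdd p c), v⟫ •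
        φ (Function.update (fun i : Fin p => e (Fin.castAdd q i)) a (e (Fin.natAdd p c)))) = 0 :=
      Finset.sum_eq_zero fun c _ => by rw [hR c, smul_zero]
    rw [e1, e2, add_zero]
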